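/- Let G be a simple graph that is not 5-colorable, let v be a vertex of G of degree at most 5, and suppose G - v admits a proper 5-coloring c. Then v has degree exactly 5, its five neighbors v1, ..., v5 receive five pairwise distinct colors under c, and for every pair of distinct indices i, j there exists a path in G - v from v_i to v_j all of whose vertices are colored i or j by c (with consecutive vertices alternating between the two colors). Consequently there exist, for each pair i < j, such paths P_{ij} that are pairwise edge-disjoint, with P_{ij} and P_{kl} vertex-disjoint whenever {i,j} and {k,l} are disjoint, and with P_{ij} avoiding v and every v_k with k not in {i,j}; that is, there is a v-immersion of K6 into G. -/

import Mathlib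

/-- A `v`-immersion of `K₆` into `G`: five distinct neighbors of `v` together with
paths between them in `G - v` (paths avoiding `v`) that are pairwise edge-disjoint,
vertex-disjoint when the index pairs are disjoint, and each avoiding the branch
vertices not among its own endpoints. -/
def VImmersionK6 {V : Type*} (G : SimpleGraph V) (v : V) : Prop :=
  ∃ f : Fin 5 → V, Function.Injective f ∧ (∀ i, G.Adj v (f i)) ∧
    ∃ P : ∀ i j : Fin 5, G.Walk (f i) (f j),
      (∀ i j, i ≠ j → (P i j).IsPath) ∧
      (∀ i j, i ≠ j → v ∉ (P i j).support) ∧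
      (∀ i j k, i ≠ j → k ≠ i → k ≠ j → f k ∉ (P i j).support) ∧
      (∀ i j k l, i ≠ j → k ≠ l → ({i, j} : Finset (Fin 5)) ≠ {k, l} →
        ∀ e ∈ (P i j).edges, e ∉ (P k l).edges) ∧
      (∀ i j k l, i ≠ j → k ≠ l →
        Disjoint ({i, j} : Finset (Fin 5)) ({k, l} : Finset (Fin 5)) →
        ∀ x ∈ (P i j).support, x ∉ (P k l).support)


theorem stmt2 {V : Type*} (G : SimpleGraph V) (v : V)
    [Fintype (G.neighborSet v)]
    (hnc : ¬ G.Colorable 5)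
    (hdeg : G.degree v ≤ 5)
    -- `c` is a proper 5-coloring of `G - v`
    (c : V → Fin 5)
    (hc : ∀ x y, G.Adj x y → x ≠ v → y ≠ v → c x ≠ c y) :
    G.degree v = 5 ∧
    ∃ f : Fin 5 → V, Function.Injective f ∧ (∀ i, G.Adj v (f i)) ∧
      Function.Injective (fun i => c (f i)) ∧
      (∀ i j : Fin 5, i ≠ j → ∃ p : G.Walk (f i) (f j), p.IsPath ∧
        v ∉ p.support ∧
        (∀ x ∈ p.support, c x = c (f i) ∨ c x = c (f j)) ∧
        p.support.Chain' (fun x y => c x ≠ c y)) ∧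
      VImmersionK6 G v := by
  classical
  -- Step 1: the coloring is surjective on the neighbors of `v`.
  have hsurj : Function.Surjective (fun u : G.neighborSet v => c u) := by
    intro a
    by_contra h
    push_neg at h
    apply hnc
    refine ⟨SimpleGraph.Coloring.mk (fun x => if x = v then a else c x) ?_⟩
    intro x y hxy
    by_cases hx : x = v
    · have hvy : G.Adj v y := hx ▸ hxy
      have hy : y ≠ v := hvy.ne'
      simp only [if_pos hx, if_neg hy]
      exact fun hh => h ⟨y, hvy⟩ hh.symm
    · by_cases hy : y = v
      · have hvx : G.Adj v x := hy ▸ hxy.symm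
        simp only [if_neg hx, if_pos hy]
        exact h ⟨x, hvx⟩
      · simp only [if_neg hx, if_neg hy]
        exact hc x y hxy hx hy
  have hcardN : Fintype.card (G.neighborSet v) = 5 := by
    have h1 := Fintype.card_le_of_surjective _ hsurj
    have h2 : Fintype.card (G.neighborSet v) = G.degree v :=
      G.card_neighborSet_eq_degree v
    simp only [Fintype.card_fin] at h1
    omega
  have hdeg5 : G.degree v = 5 := by
    rw [← G.card_neighborSet_eq_degree]; exact hcardN
  have hbij : Function.Bijective (fun u : G.neighborSet v => c u) :=
    (Fintype.bijective_iff_surjective_and_card _).2 ⟨hsurj, by simp [hcardN]⟩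
  set e := Equiv.ofBijective _ hbij with he
  set f : Fin 5 → V := fun i => (e.symm i : V) with hf
  have hcf : ∀ i, c (f i) = i := fun i => e.apply_symm_apply i
  have hfadj : ∀ i, G.Adj v (f i) := fun i => (e.symm i).2
  have hfinj : Function.Injective f := by
    intro a b hab
    have := congrArg c hab
    rwa [hcf, hcf] at this
  have hfmem : ∀ u, G.Adj v u → f (c u) = u := by
    intro u hu
    have : e.symm (e ⟨u, hu⟩) = ⟨u, hu⟩ := e.symm_apply_apply _
    exact congrArg Subtype.val this
  -- Step 2: Kempe chains.
  have key : ∀ i j : Fin 5, i ≠ j → ∃ p : G.Walk (f i) (f j), p.IsPath ∧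
      (∀ x ∈ p.support, x ≠ v ∧ (c x = i ∨ c x = j)) ∧
      p.support.Chain' (fun x y => c x ≠ c y) := by
    intro i j hij
    let H : SimpleGraph V :=
      { Adj := fun x y => G.Adj x y ∧ x ≠ v ∧ y ≠ v ∧
          (c x = i ∨ c x = j) ∧ (c y = i ∨ c y = j)
        symm := ⟨by
          rintro x y ⟨h1, h2, h3, h4, h5⟩
          exact ⟨h1.symm, h3, h2, h5, h4⟩⟩
        loopless := ⟨fun x h => G.irrefl h.1⟩ }
    have hHG : H ≤ G := fun x y h => h.1
    have hR : ∀ x, H.Reachable (f i) x → x ≠ v ∧ (c x = i ∨ c x = j) := by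
      intro x hx
      obtain ⟨p⟩ := hx.symm
      cases p with
      | nil => exact ⟨(hfadj i).ne', Or.inl (hcf i)⟩
      | cons h q => exact ⟨h.2.1, h.2.2.2.1⟩
    by_cases hreach : H.Reachable (f i) (f j)
    · -- extract the path
      obtain ⟨p0⟩ := hreach
      set p1 : H.Walk (f i) (f j) := p0.toPath.1 with hp1
      have hp1path : p1.IsPath := p0.toPath.2
      have hsupp : ∀ x ∈ p1.support, x ≠ v ∧ (c x = i ∨ c x = j) := by
        intro x hx
        exact hR x ⟨p1.takeUntil x hx⟩
      refine ⟨p1.mapLe hHG, hp1path.mapLe hHG, ?_, ?_⟩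
      · have hs : (p1.mapLe hHG).support = p1.support := by
          simp only [SimpleGraph.Walk.mapLe, SimpleGraph.Walk.support_map]
          exact List.map_id _
        rw [hs]
        exact hsupp
      · have hs : (p1.mapLe hHG).support = p1.support := by
          simp only [SimpleGraph.Walk.mapLe, SimpleGraph.Walk.support_map]
          exact List.map_id _
        rw [hs]
        exact (p1.isChain_adj_support).imp fun x y h => hc _ _ h.1 h.2.1 h.2.2.1
    · -- otherwise swap colors on the Kempe component and recolor `v`
      exfalso
      apply hnc
      set s : Equiv.Perm (Fin 5) := Equiv.swap i j with hs
      set c2 : V → Fin 5 := fun x => if H.Reachable (f i) x then s (c x) else c x with hc2def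
      have hc2 : ∀ x y, G.Adj x y → x ≠ v → y ≠ v → c2 x ≠ c2 y := by
        intro x y hxy hx hy
        have hcxy := hc x y hxy hx hy
        by_cases hrx : H.Reachable (f i) x <;> by_cases hry : H.Reachable (f i) y
        · simp only [hc2def, if_pos hrx, if_pos hry]
          exact fun hh => hcxy (s.injective hh)
        · have hcx := (hR x hrx).2
          have hcy : ¬ (c y = i ∨ c y = j) := fun hcy =>
            hry (hrx.trans (SimpleGraph.Adj.reachable ⟨hxy, hx, hy, hcx, hcy⟩))
          simp only [hc2def, if_pos hrx, if_neg hry]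
          intro hh
          apply hcy
          rcases hcx with h4 | h4
          · right; rw [← hh, h4]; exact Equiv.swap_apply_left i j
          · left; rw [← hh, h4]; exact Equiv.swap_apply_right i j
        · have hcy := (hR y hry).2
          have hcx : ¬ (c x = i ∨ c x = j) := fun hcx =>
            hrx (hry.trans (SimpleGraph.Adj.reachable ⟨hxy.symm, hy, hx, hcy, hcx⟩))
          simp only [hc2def, if_neg hrx, if_pos hry]
          intro hh
          apply hcx
          rcases hcy with h4 | h4
          · right; rw [hh, h4]; exact Equiv.swap_apply_left i j
          · left; rw [hh, h4]; exact Equiv.swap_apply_right i j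
        · simp only [hc2def, if_neg hrx, if_neg hry]
          exact hcxy
      have hnb : ∀ u, G.Adj v u → c2 u ≠ i := by
        intro u hu
        by_cases hru : H.Reachable (f i) u
        · have hcu := (hR u hru).2
          simp only [hc2def, if_pos hru]
          rcases hcu with h4 | h4
          · rw [h4, hs, Equiv.swap_apply_left]
            exact hij.symm
          · exfalso
            apply hreach
            have huj : u = f j := by rw [← hfmem u hu, h4]
            rw [← huj]
            exact hru
        · simp only [hc2def, if_neg hru]
          intro hcu
          apply hru
          have hui : u = f i := by rw [← hfmem u hu, hcu]
          rw [hui]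
      refine ⟨SimpleGraph.Coloring.mk (fun x => if x = v then i else c2 x) ?_⟩
      intro x y hxy
      by_cases hx : x = v
      · have hvy : G.Adj v y := hx ▸ hxy
        have hy : y ≠ v := hvy.ne'
        simp only [if_pos hx, if_neg hy]
        exact fun hh => hnb y hvy hh.symm
      · by_cases hy : y = v
        · have hvx : G.Adj v x := hy ▸ hxy.symm
          simp only [if_neg hx, if_pos hy]
          exact hnb x hvx
        · simp only [if_neg hx, if_neg hy]
          exact hc2 x y hxy hx hy
  choose P hpath hsup hchain using key
  -- colors of edges of the paths
  have hcolor : ∀ (i j : Fin 5) (hij : i ≠ j), ∀ e ∈ (P i j hij).edges,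
      Sym2.map c e = s(i, j) := by
    intro i j hij e he
    induction e with
    | _ x y =>
      have hx := hsup i j hij x ((P i j hij).fst_mem_support_of_mem_edges he)
      have hy := hsup i j hij y ((P i j hij).snd_mem_support_of_mem_edges he)
      have hadj : G.Adj x y := (P i j hij).edges_subset_edgeSet he
      have hne := hc x y hadj hx.1 hy.1
      rw [Sym2.map_pair_eq]
      rcases hx.2 with h1 | h1 <;> rcases hy.2 with h2 | h2
      · exact absurd (h1.trans h2.symm) hne
      · rw [h1, h2]
      · rw [h1, h2, Sym2.eq_swap]
      · exact absurd (h1.trans h2.symm) hne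
  refine ⟨hdeg5, f, hfinj, hfadj, ?_, ?_, ?_⟩
  · intro a b hab
    simp only [hcf] at hab
    exact hab
  · intro i j hij
    refine ⟨P i j hij, hpath i j hij, ?_, ?_, hchain i j hij⟩
    · exact fun hv => (hsup i j hij v hv).1 rfl
    · intro x hx
      rw [hcf, hcf]
      exact (hsup i j hij x hx).2
  · refine ⟨f, hfinj, hfadj,
      fun i j => if h : i = j then
        SimpleGraph.Walk.copy SimpleGraph.Walk.nil rfl (congrArg f h)
      else P i j h, ?_, ?_, ?_, ?_, ?_⟩
    · intro i j h
      simp only [dif_neg h]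
      exact hpath i j h
    · intro i j h
      simp only [dif_neg h]
      exact fun hv => (hsup i j h v hv).1 rfl
    · intro i j k hij hki hkj
      simp only [dif_neg hij]
      intro hmem
      have hk := (hsup i j hij (f k) hmem).2
      rw [hcf] at hk
      rcases hk with h | h
      · exact hki h
      · exact hkj h
    · intro i j k l hij hkl hne e he1 he2
      simp only [dif_neg hij] at he1
      simp only [dif_neg hkl] at he2
      have h1 := hcolor i j hij e he1
      have h2 := hcolor k l hkl e he2
      apply hne
      have h3 : s(i, j) = s(k, l) := h1.symm.trans h2
      rw [Sym2.eq_iff] at h3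
      rcases h3 with ⟨rfl, rfl⟩ | ⟨rfl, rfl⟩
      · rfl
      · exact Finset.pair_comm i j
    · intro i j k l hij hkl hdisj x hx1
      simp only [dif_neg hij] at hx1
      simp only [dif_neg hkl]
      intro hx2
      have h1 := (hsup i j hij x hx1).2
      have h2 := (hsup k l hkl x hx2).2
      have m1 : c x ∈ ({i, j} : Finset (Fin 5)) := by
        rcases h1 with h | h <;> simp [h]
      have m2 : c x ∈ ({k, l} : Finset (Fin 5)) := by
        rcases h2 with h | h <;> simp [h]
      exact Finset.disjoint_left.mp hdisj m1 m2
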